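/- Fix c* > 0 and define, for each transmit SNR ρ > 0, the ipSIC outage probability P(ρ) = ∫₀^∞ e^{−z} · F(√((c*/ρ) · d_sr^α · (β² M N_r Δ₁ + d_k^α (λ_q² + ε ρ Ω_I z)))) dz. Then as ρ → ∞, P(ρ) converges to the finite limit ∫₀^∞ e^{−z} · F(√(c* · d_sr^α d_k^α · ε Ω_I z)) dz. -/

import Mathlib

open MeasureTheory ProbabilityTheory Topology Filter

/-- Lower incomplete gamma function `γ(s, x) = ∫₀ˣ t^{s-1} e^{-t} dt`. -/
noncomputable def lowerGamma (s x : ℝ) : ℝ := ∫ t in (0:ℝ)..x, t ^ (s - 1) * Real.exp (-t)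

/-- `μ₀ = ((M+1)π² − 16)/(16 − π²)`. -/
noncomputable def mu0 (M : ℕ) : ℝ := (((M : ℝ) + 1) * Real.pi ^ 2 - 16) / (16 - Real.pi ^ 2)

/-- `φ₀ = (16 − π²)/(4π)`. -/
noncomputable def phi0 : ℝ := (16 - Real.pi ^ 2) / (4 * Real.pi)

/-- The CDF of the Gamma distribution with shape `μ₀+1` and scale `φ₀`:
`F(x) = γ(μ₀+1, x/φ₀)/Γ(μ₀+1)`. -/
noncomputable def F (M : ℕ) (x : ℝ) : ℝ :=
  lowerGamma (mu0 M + 1) (x / phi0) / Real.Gamma (mu0 M + 1)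


lemma sixteen_sub_pi_sq_pos : (0:ℝ) < 16 - Real.pi ^ 2 := by
  nlinarith [Real.pi_lt_d2, Real.pi_pos]

lemma phi0_pos : 0 < phi0 :=
  div_pos sixteen_sub_pi_sq_pos (by positivity)

lemma s_pos (M : ℕ) (hM : 0 < M) : 0 < mu0 M + 1 := by
  have h16 := sixteen_sub_pi_sq_pos
  have hMR : (0:ℝ) < M := by exact_mod_cast hM
  have h : mu0 M + 1 = (M : ℝ) * Real.pi ^ 2 / (16 - Real.pi ^ 2) := by
    unfold mu0; field_simp; ring
  rw [h]
  have := Real.pi_pos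
  positivity

lemma gamma_integrand_intInt (s : ℝ) (hs : 0 < s) (a b : ℝ) :
    IntervalIntegrable (fun t => t ^ (s - 1) * Real.exp (-t)) volume a b :=
  (intervalIntegral.intervalIntegrable_rpow' (by linarith)).mul_continuousOn
    (Continuous.continuousOn (by continuity))

lemma F_continuous (M : ℕ) (hM : 0 < M) : Continuous (F M) := by
  unfold F lowerGamma
  exact ((intervalIntegral.continuous_primitive
    (gamma_integrand_intInt _ (s_pos M hM)) 0).comp
    (continuous_id.div_const _)).div_const _

lemma F_nonneg (M : ℕ) (hM : 0 < M) {x : ℝ} (hx : 0 ≤ x) : 0 ≤ F M x := by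
  have hy : (0:ℝ) ≤ x / phi0 := div_nonneg hx phi0_pos.le
  refine div_nonneg ?_ (Real.Gamma_pos_of_pos (s_pos M hM)).le
  refine intervalIntegral.integral_nonneg hy fun u hu => ?_
  exact mul_nonneg (Real.rpow_nonneg hu.1 _) (Real.exp_nonneg _)

lemma F_le_one (M : ℕ) (hM : 0 < M) {x : ℝ} (hx : 0 ≤ x) : F M x ≤ 1 := by
  have hs := s_pos M hM
  have hy : (0:ℝ) ≤ x / phi0 := div_nonneg hx phi0_pos.le
  rw [F, div_le_one (Real.Gamma_pos_of_pos hs), Real.Gamma_eq_integral hs]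
  rw [lowerGamma, intervalIntegral.integral_of_le hy]
  have heq : ∀ t : ℝ, t ^ (mu0 M + 1 - 1) * Real.exp (-t)
      = Real.exp (-t) * t ^ (mu0 M + 1 - 1) := fun t => mul_comm _ _
  simp_rw [heq]
  refine setIntegral_mono_set (Real.GammaIntegral_convergent hs) ?_
    (Set.Ioc_subset_Ioi_self.eventuallyLE)
  filter_upwards [ae_restrict_mem measurableSet_Ioi] with t ht
  exact mul_nonneg (Real.exp_nonneg _) (Real.rpow_nonneg (le_of_lt ht) _)

/-- **Asymptotic OP (ARIS-NOMA, ipSIC)**: as `ρ → ∞`, the ipSIC outage probability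
`P(ρ)` converges to `∫₀^∞ e^{−z} F(√(c* d_sr^α d_k^α ε Ω_I z)) dz`. -/
theorem asymptotic_outage_ARIS_NOMA_ipSIC
    (M : ℕ) (hM : 0 < M)
    (c lamq beta Nr Δ1 alpha dsr dk eps ΩI : ℝ)
    (hc : 0 < c) (hlam0 : 0 < lamq) (hlam1 : lamq ≤ 1) (hbeta : 0 < beta)
    (hNr : 0 < Nr) (hΔ1 : 0 < Δ1) (halpha : 0 < alpha) (hdsr : 0 < dsr) (hdk : 0 < dk)
    (heps0 : 0 < eps) (heps1 : eps ≤ 1) (hΩI : 0 < ΩI) :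
    Filter.Tendsto
      (fun rho : ℝ => ∫ z in Set.Ioi (0 : ℝ), Real.exp (-z) *
        F M (Real.sqrt ((c / rho) * (dsr ^ alpha *
          (beta ^ 2 * (M : ℝ) * Nr * Δ1
            + dk ^ alpha * (lamq ^ 2 + eps * rho * ΩI * z))))))
      Filter.atTop
      (𝓝 (∫ z in Set.Ioi (0 : ℝ), Real.exp (-z) *
        F M (Real.sqrt (c * dsr ^ alpha * dk ^ alpha * (eps * ΩI * z))))) := by
  have hFc := F_continuous M hM
  refine tendsto_integral_filter_of_dominated_convergence (fun z => Real.exp (-z))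
    ?_ ?_ ?_ ?_
  · exact Filter.Eventually.of_forall fun rho =>
      ((Real.continuous_exp.comp continuous_neg).mul
        (hFc.comp (Real.continuous_sqrt.comp (by continuity)))).aestronglyMeasurable
  · refine Filter.Eventually.of_forall fun rho => ae_of_all _ fun z => ?_
    have h0 : (0:ℝ) ≤ Real.sqrt ((c / rho) * (dsr ^ alpha *
        (beta ^ 2 * (M : ℝ) * Nr * Δ1 + dk ^ alpha * (lamq ^ 2 + eps * rho * ΩI * z)))) :=
      Real.sqrt_nonneg _
    rw [norm_mul, Real.norm_eq_abs, Real.norm_eq_abs, abs_of_nonneg (Real.exp_nonneg _),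
      abs_of_nonneg (F_nonneg M hM h0)]
    calc Real.exp (-z) * F M _ ≤ Real.exp (-z) * 1 :=
          mul_le_mul_of_nonneg_left (F_le_one M hM h0) (Real.exp_nonneg _)
      _ = Real.exp (-z) := mul_one _
  · exact (by simpa using exp_neg_integrableOn_Ioi 0 one_pos :
      IntegrableOn (fun x : ℝ => Real.exp (-x)) (Set.Ioi 0))
  · refine ae_of_all _ fun z => ?_
    have hinner : Filter.Tendsto (fun rho : ℝ => (c / rho) * (dsr ^ alpha *
        (beta ^ 2 * (M : ℝ) * Nr * Δ1 + dk ^ alpha * (lamq ^ 2 + eps * rho * ΩI * z))))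
        Filter.atTop (𝓝 (c * dsr ^ alpha * dk ^ alpha * (eps * ΩI * z))) := by
      have heq : (fun rho : ℝ => (c / rho) * (dsr ^ alpha *
          (beta ^ 2 * (M : ℝ) * Nr * Δ1 + dk ^ alpha * (lamq ^ 2 + eps * rho * ΩI * z))))
          =ᶠ[Filter.atTop]
          (fun rho : ℝ => (c * dsr ^ alpha *
            (beta ^ 2 * (M : ℝ) * Nr * Δ1 + dk ^ alpha * lamq ^ 2)) * rho⁻¹
            + c * dsr ^ alpha * dk ^ alpha * (eps * ΩI * z)) := by
        filter_upwards [eventually_gt_atTop (0:ℝ)] with rho hrho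
        field_simp
        ring
      refine Filter.Tendsto.congr' heq.symm ?_
      have h1 : Filter.Tendsto (fun rho : ℝ => (c * dsr ^ alpha *
          (beta ^ 2 * (M : ℝ) * Nr * Δ1 + dk ^ alpha * lamq ^ 2)) * rho⁻¹)
          Filter.atTop (𝓝 0) := by
        simpa using tendsto_inv_atTop_zero.const_mul
          (c * dsr ^ alpha * (beta ^ 2 * (M : ℝ) * Nr * Δ1 + dk ^ alpha * lamq ^ 2))
      simpa using h1.add_const (c * dsr ^ alpha * dk ^ alpha * (eps * ΩI * z))
    exact (tendsto_const_nhds.mul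
      ((hFc.tendsto _).comp ((Real.continuous_sqrt.tendsto _).comp hinner)))
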